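/- Fix η₀ > 0 and integers n ≥ 0 and m ≥ 1. Then 16 s₀ q_{n+1,m} τ_{n,m} = −2 s₀ (2n+3)(2n+2m+1) q_{n+1,m−1} + 8 m q_{n+2,m}. In particular both terms on the right-hand side have the sign (−1)^m, so τ_{n,m} > 0 for m ≥ 1. -/

import Mathlib

open Real MeasureTheory intervalIntegral Filter Topology

/-- Associated Legendre function of the second kind of half-integer degree,
`Q_{n-1/2}^m(t)`, defined via its real integral representation (valid for `t > 1`). -/
noncomputable def Qh (n m : ℕ) (t : ℝ) : ℝ :=
  ((-1 : ℝ) ^ m / (2 : ℝ) ^ ((n : ℝ) + 1 / 2)) *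
    (Real.Gamma ((n : ℝ) + (m : ℝ) + 1 / 2) / Real.Gamma ((n : ℝ) + 1 / 2)) *
    (t ^ 2 - 1) ^ ((m : ℝ) / 2) *
    ∫ s in (-1 : ℝ)..1, (1 - s ^ 2) ^ ((n : ℝ) - 1 / 2) * (t - s) ^ (-((n : ℝ) + (m : ℝ) + 1 / 2))

/-- `q_{n,m} = Q_{n-1/2}^m(cosh η₀)`. -/
noncomputable def qh (η₀ : ℝ) (n m : ℕ) : ℝ := Qh n m (Real.cosh η₀)

/-- `Φ_n^{+1}(θ) = cos (n θ)`, `Φ_n^{-1}(θ) = sin (n θ)`. -/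
noncomputable def Phi (ν : ℤ) (n : ℤ) (θ : ℝ) : ℝ :=
  if ν = 1 then Real.cos ((n : ℝ) * θ) else Real.sin ((n : ℝ) * θ)

/-- A quadruple `(n, m, ν, μ)` is admissible. -/
def Admissible (n m : ℕ) (ν μ : ℤ) : Prop :=
  (ν = 1 ∨ ν = -1) ∧ (μ = 1 ∨ μ = -1) ∧ ¬(n = 0 ∧ ν = -1) ∧ ¬(m = 0 ∧ μ = -1)

/-- Toroidal Neumann constant `ρ_{n,m}(η₀)` (`n ≥ 1`). -/
noncomputable def rhoT (η₀ : ℝ) (n m : ℕ) : ℝ :=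
  if n = 1 then
    (1 / (2 * Real.sinh η₀)) *
      (Real.cosh η₀ + (2 * (m : ℝ) - 1) * qh η₀ 1 m / qh η₀ 0 m)
  else
    (1 / (4 * Real.sinh η₀)) *
      ((2 * (n : ℝ) - 1) * Real.cosh η₀ +
        (2 * ((m : ℝ) - (n : ℝ)) + 1) * qh η₀ n m / qh η₀ (n - 1) m)

/-- Toroidal Neumann constant `σ_{n,m}(η₀)`. -/
noncomputable def sigmaT (η₀ : ℝ) (n m : ℕ) : ℝ :=
  (-1 / (2 * Real.sinh η₀)) *
    ((2 * (n : ℝ) * Real.cosh η₀ ^ 2 + 1) +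
      (2 * ((m : ℝ) - (n : ℝ)) - 1) * Real.cosh η₀ * qh η₀ (n + 1) m / qh η₀ n m)

/-- Toroidal Neumann constant `τ_{n,m}(η₀)`. -/
noncomputable def tauT (η₀ : ℝ) (n m : ℕ) : ℝ :=
  (1 / (4 * Real.sinh η₀)) *
    ((2 * (n : ℝ) + 3) * Real.cosh η₀ +
      (2 * ((m : ℝ) - (n : ℝ)) - 3) * qh η₀ (n + 2) m / qh η₀ (n + 1) m)

/-- The normal derivative `N_{n,m}^{ν,μ}(θ,φ)` of the interior toroidal harmonic
`I_{n,m}^{ν,μ}` on the torus `η = η₀`. -/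
noncomputable def NDer (η₀ : ℝ) (n m : ℕ) (ν μ : ℤ) (θ φ : ℝ) : ℝ :=
  (Real.sqrt (Real.cosh η₀ - Real.cos θ) / (4 * Real.sinh η₀)) * Phi μ (m : ℤ) φ *
    (Phi ν ((n : ℤ) - 1) θ *
        ((1 + 2 * (n : ℝ)) * Real.cosh η₀ -
          (2 * ((n : ℝ) - (m : ℝ)) + 1) * qh η₀ (n + 1) m / qh η₀ n m) -
      2 * Phi ν (n : ℤ) θ *
        ((2 * (n : ℝ) * Real.cosh η₀ ^ 2 + 1) -
          (2 * ((n : ℝ) - (m : ℝ)) + 1) * Real.cosh η₀ * qh η₀ (n + 1) m / qh η₀ n m) +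
      Phi ν ((n : ℤ) + 1) θ *
        ((1 + 2 * (n : ℝ)) * Real.cosh η₀ -
          (2 * ((n : ℝ) - (m : ℝ)) + 1) * qh η₀ (n + 1) m / qh η₀ n m))

/-- Interior toroidal harmonic `I_{n,m}^{ν,μ}[η₀]` in toroidal coordinates. -/
noncomputable def Ih (η₀ : ℝ) (n m : ℕ) (ν μ : ℤ) (η θ φ : ℝ) : ℝ :=
  Real.sqrt (Real.cosh η - Real.cos θ) *
    (Qh n m (Real.cosh η) / Qh n m (Real.cosh η₀)) * Phi ν (n : ℤ) θ * Phi μ (m : ℤ) φ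

noncomputable def Jint (t c b : ℝ) : ℝ :=
  ∫ s in (-1:ℝ)..1, (1 - s ^ 2) ^ c * (t - s) ^ b

lemma cont1 {c : ℝ} (hc : 0 ≤ c) : Continuous (fun s : ℝ => (1 - s ^ 2) ^ c) := by
  rw [continuous_iff_continuousAt]
  intro x
  exact (Real.continuousAt_rpow_const _ _ (Or.inr hc)).comp (by fun_prop)

lemma cont2 {t : ℝ} (b : ℝ) (ht : 1 < t) :
    ContinuousOn (fun s : ℝ => (t - s) ^ b) (Set.Icc (-1:ℝ) 1) := by
  intro x hx
  have hne : t - x ≠ 0 := by have := hx.2; intro h; nlinarith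
  exact ((Real.continuousAt_rpow_const _ _ (Or.inl hne)).comp
    (by fun_prop : ContinuousAt (fun s : ℝ => t - s) x)).continuousWithinAt

lemma cont_aux (t c b : ℝ) (hc : 0 ≤ c) (ht : 1 < t) :
    ContinuousOn (fun s : ℝ => (1 - s ^ 2) ^ c * (t - s) ^ b) (Set.uIcc (-1:ℝ) 1) := by
  rw [Set.uIcc_of_le (by norm_num)]
  exact ((cont1 hc).continuousOn).mul (cont2 b ht)

lemma Jint_intable (t c b : ℝ) (hc : 0 ≤ c) (ht : 1 < t) :
    IntervalIntegrable (fun s : ℝ => (1 - s ^ 2) ^ c * (t - s) ^ b) volume (-1) 1 :=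
  (cont_aux t c b hc ht).intervalIntegrable

lemma Jint_pos (t c b : ℝ) (hc : 0 ≤ c) (ht : 1 < t) : 0 < Jint t c b := by
  apply intervalIntegral.intervalIntegral_pos_of_pos_on (Jint_intable t c b hc ht)
  · intro x hx
    have h1 : 0 < 1 - x ^ 2 := by nlinarith [hx.1, hx.2]
    have h2 : 0 < t - x := by linarith [hx.2]
    positivity
  · norm_num

lemma Jint_ibp (t p a : ℝ) (ht : 1 < t) (hp : 1 ≤ p) :
    a * Jint t p (-(a+1)) =
      2 * p * ∫ s in (-1:ℝ)..1, s * ((1 - s ^ 2) ^ (p-1) * (t - s) ^ (-a)) := by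
  set u : ℝ → ℝ := fun s => (1 - s ^ 2) ^ p with hu_def
  set v : ℝ → ℝ := fun s => (t - s) ^ (-a) with hv_def
  set u' : ℝ → ℝ := fun s => p * (1 - s ^ 2) ^ (p-1) * (-2 * s) with hu'_def
  set v' : ℝ → ℝ := fun s => a * (t - s) ^ (-(a+1)) with hv'_def
  have hu : ∀ x ∈ Set.uIcc (-1:ℝ) 1, HasDerivAt u (u' x) x := by
    intro x hx
    have h1 : HasDerivAt (fun s : ℝ => 1 - s ^ 2) (-2 * x) x := by
      simpa using ((hasDerivAt_pow 2 x).const_sub 1)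
    have h2 : HasDerivAt (fun y : ℝ => y ^ p) (p * (1 - x ^ 2) ^ (p-1)) (1 - x ^ 2) :=
      Real.hasDerivAt_rpow_const (Or.inr hp)
    exact h2.comp x h1
  have hv : ∀ x ∈ Set.uIcc (-1:ℝ) 1, HasDerivAt v (v' x) x := by
    intro x hx
    rw [Set.uIcc_of_le (by norm_num)] at hx
    have hne : t - x ≠ 0 := by have := hx.2; intro h; nlinarith
    have h1 : HasDerivAt (fun s : ℝ => t - s) (-1) x := by
      simpa using (hasDerivAt_id x).const_sub t
    have h2 : HasDerivAt (fun y : ℝ => y ^ (-a)) ((-a) * (t - x) ^ (-a - 1)) (t - x) :=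
      Real.hasDerivAt_rpow_const (Or.inl hne)
    have := h2.comp x h1
    convert this using 1
    show a * (t - x) ^ (-(a+1)) = _
    rw [show -(a+1) = -a-1 by ring]
    ring
    all_goals rfl
  have hcu' : IntervalIntegrable u' volume (-1) 1 := by
    apply ContinuousOn.intervalIntegrable
    rw [Set.uIcc_of_le (by norm_num)]
    simp only [hu'_def]
    exact ((continuous_const.mul (cont1 (by linarith : (0:ℝ) ≤ p - 1))).mul
      (by fun_prop)).continuousOn
  have hcv' : IntervalIntegrable v' volume (-1) 1 := by
    apply ContinuousOn.intervalIntegrable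
    rw [Set.uIcc_of_le (by norm_num)]
    simp only [hv'_def]
    exact continuousOn_const.mul (cont2 _ ht)
  have hibp := intervalIntegral.integral_deriv_mul_eq_sub hu hv hcu' hcv'
  have hzero : u 1 * v 1 - u (-1) * v (-1) = 0 := by
    have hp0 : p ≠ 0 := by linarith
    simp [hu_def, hv_def, Real.zero_rpow hp0]
  rw [hzero] at hibp
  -- split the integral
  have hIA : IntervalIntegrable (fun x => u' x * v x) volume (-1) 1 := by
    apply ContinuousOn.intervalIntegrable
    rw [Set.uIcc_of_le (by norm_num)]
    simp only [hu'_def, hv_def]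
    exact (((continuous_const.mul (cont1 (by linarith : (0:ℝ) ≤ p - 1))).mul
      (by fun_prop)).continuousOn).mul (cont2 _ ht)
  have hIB : IntervalIntegrable (fun x => u x * v' x) volume (-1) 1 := by
    apply ContinuousOn.intervalIntegrable
    rw [Set.uIcc_of_le (by norm_num)]
    simp only [hu_def, hv'_def]
    exact ((cont1 (by linarith : (0:ℝ) ≤ p)).continuousOn).mul
      (continuousOn_const.mul (cont2 _ ht))
  rw [intervalIntegral.integral_add hIA hIB] at hibp
  have hA : (∫ x in (-1:ℝ)..1, u' x * v x)
      = (-2 * p) * ∫ s in (-1:ℝ)..1, s * ((1 - s ^ 2) ^ (p-1) * (t - s) ^ (-a)) := by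
    rw [← intervalIntegral.integral_const_mul]
    apply intervalIntegral.integral_congr
    intro x hx
    simp only [hu'_def, hv_def]
    ring
  have hB : (∫ x in (-1:ℝ)..1, u x * v' x) = a * Jint t p (-(a+1)) := by
    rw [Jint, ← intervalIntegral.integral_const_mul]
    apply intervalIntegral.integral_congr
    intro x hx
    simp only [hu_def, hv'_def]
    ring
  rw [hA, hB] at hibp
  linarith

lemma Jint_key (t p a : ℝ) (ht : 1 < t) (hp : 1 ≤ p) :
    a * Jint t p (-(a+1)) = 2 * p * (t * Jint t (p-1) (-a) - Jint t (p-1) (-(a-1))) := by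
  rw [Jint_ibp t p a ht hp]
  congr 1
  have hEq : Set.EqOn (fun s : ℝ => s * ((1 - s ^ 2) ^ (p-1) * (t - s) ^ (-a)))
      (fun s : ℝ => t * ((1 - s ^ 2) ^ (p-1) * (t - s) ^ (-a))
        - (1 - s ^ 2) ^ (p-1) * (t - s) ^ (-(a-1))) (Set.uIcc (-1:ℝ) 1) := by
    intro x hx
    rw [Set.uIcc_of_le (by norm_num)] at hx
    have hpos : 0 < t - x := by have := hx.2; linarith
    have key : (t - x) ^ (-(a-1)) = (t - x) ^ (-a) * (t - x) := by
      rw [show -(a-1) = -a + 1 by ring, Real.rpow_add hpos, Real.rpow_one]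
    simp only
    rw [key]
    ring
  rw [intervalIntegral.integral_congr hEq]
  have h1 : IntervalIntegrable (fun s : ℝ => t * ((1 - s ^ 2) ^ (p-1) * (t - s) ^ (-a)))
      volume (-1) 1 := by
    apply IntervalIntegrable.const_mul
    exact Jint_intable t (p-1) (-a) (by linarith) ht
  have h2 := Jint_intable t (p-1) (-(a-1)) (by linarith) ht
  rw [intervalIntegral.integral_sub h1 h2, intervalIntegral.integral_const_mul]
  rfl

lemma qh_eq (η₀ : ℝ) (n m : ℕ) :
    qh η₀ n m = ((-1 : ℝ) ^ m / (2 : ℝ) ^ ((n : ℝ) + 1 / 2)) *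
      (Real.Gamma ((n : ℝ) + (m : ℝ) + 1 / 2) / Real.Gamma ((n : ℝ) + 1 / 2)) *
      ((Real.cosh η₀) ^ 2 - 1) ^ ((m : ℝ) / 2) *
      Jint (Real.cosh η₀) ((n : ℝ) - 1 / 2) (-((n : ℝ) + (m : ℝ) + 1 / 2)) := rfl

lemma qh_sign (η₀ : ℝ) (hη₀ : 0 < η₀) (n m : ℕ) (hn : 1 ≤ n) :
    0 < (-1 : ℝ) ^ m * qh η₀ n m := by
  rw [qh_eq]
  have ht : 1 < Real.cosh η₀ := by
    have := Real.one_lt_cosh.mpr (ne_of_gt hη₀)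
    exact this
  have h1 : (0:ℝ) < Real.cosh η₀ ^ 2 - 1 := by nlinarith
  have hn' : (1:ℝ) ≤ (n:ℝ) := by exact_mod_cast hn
  have hJ : 0 < Jint (Real.cosh η₀) ((n : ℝ) - 1 / 2) (-((n : ℝ) + (m : ℝ) + 1 / 2)) :=
    Jint_pos _ _ _ (by linarith) ht
  have hG1 : 0 < Real.Gamma ((n : ℝ) + (m : ℝ) + 1 / 2) :=
    Real.Gamma_pos_of_pos (by positivity)
  have hG2 : 0 < Real.Gamma ((n : ℝ) + 1 / 2) := Real.Gamma_pos_of_pos (by positivity)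
  have h2 : (0:ℝ) < (2 : ℝ) ^ ((n : ℝ) + 1 / 2) := by positivity
  have hm : ((-1:ℝ) ^ m) * ((-1:ℝ) ^ m) = 1 := by
    rw [← mul_pow]; norm_num
  have hrp : (0:ℝ) < ((Real.cosh η₀) ^ 2 - 1) ^ ((m : ℝ) / 2) := by positivity
  calc (0:ℝ) < (((-1:ℝ) ^ m) * ((-1:ℝ) ^ m)) *
      ((1 / (2 : ℝ) ^ ((n : ℝ) + 1 / 2)) *
      (Real.Gamma ((n : ℝ) + (m : ℝ) + 1 / 2) / Real.Gamma ((n : ℝ) + 1 / 2)) *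
      ((Real.cosh η₀) ^ 2 - 1) ^ ((m : ℝ) / 2) *
      Jint (Real.cosh η₀) ((n : ℝ) - 1 / 2) (-((n : ℝ) + (m : ℝ) + 1 / 2))) := by
        rw [hm]; positivity
    _ = _ := by ring

lemma qh_rec (η₀ : ℝ) (hη₀ : 0 < η₀) (n k : ℕ) :
    qh η₀ (n+2) (k+1) = Real.cosh η₀ * qh η₀ (n+1) (k+1)
      + (Real.sinh η₀ / 2) * (2*(n:ℝ) + 2*(k:ℝ) + 3) * qh η₀ (n+1) k := by
  set t := Real.cosh η₀ with htdef
  set S := Real.sinh η₀ with hSdef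
  have ht : 1 < t := Real.one_lt_cosh.mpr (ne_of_gt hη₀)
  have hS : 0 < S := Real.sinh_pos_iff.mpr hη₀
  have hS2 : S ^ 2 = t ^ 2 - 1 := by
    have := Real.cosh_sq η₀
    rw [← htdef, ← hSdef] at this
    linarith
  have h1 : (0:ℝ) < t ^ 2 - 1 := by nlinarith
  set a : ℝ := (n:ℝ) + (k:ℝ) + 5/2 with hadef
  have ha0 : 0 < a := by positivity
  have hn0 : (0:ℝ) ≤ (n:ℝ) := Nat.cast_nonneg n
  have hk0 : (0:ℝ) ≤ (k:ℝ) := Nat.cast_nonneg k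
  have ha1 : 0 < a - 1 := by rw [hadef]; linarith
  set J2 := Jint t ((n:ℝ)+3/2) (-(a+1)) with hJ2def
  set J1 := Jint t ((n:ℝ)+1/2) (-a) with hJ1def
  set J0 := Jint t ((n:ℝ)+1/2) (-(a-1)) with hJ0def
  have hkey : a * J2 = (2*(n:ℝ)+3) * (t * J1 - J0) := by
    have h := Jint_key t ((n:ℝ)+3/2) a ht (by linarith)
    rw [show ((n:ℝ)+3/2-1) = (n:ℝ)+1/2 by ring] at h
    rw [hJ2def, hJ1def, hJ0def]
    rw [h]; ring
  -- express the three qh values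
  have e2 : qh η₀ (n+2) (k+1) = ((-1:ℝ)^(k+1) / (2:ℝ)^((n:ℝ)+5/2)) *
      (Real.Gamma (a+1) / Real.Gamma ((n:ℝ)+5/2)) * (t^2-1)^(((k:ℝ)+1)/2) * J2 := by
    rw [qh_eq, hJ2def, hadef]
    push_cast
    simp only [Jint]
    ring_nf
    rfl
  have e1 : qh η₀ (n+1) (k+1) = ((-1:ℝ)^(k+1) / (2:ℝ)^((n:ℝ)+3/2)) *
      (Real.Gamma a / Real.Gamma ((n:ℝ)+3/2)) * (t^2-1)^(((k:ℝ)+1)/2) * J1 := by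
    rw [qh_eq, hJ1def, hadef]
    push_cast
    simp only [Jint]
    ring_nf
    rfl
  have e0 : qh η₀ (n+1) k = ((-1:ℝ)^k / (2:ℝ)^((n:ℝ)+3/2)) *
      (Real.Gamma (a-1) / Real.Gamma ((n:ℝ)+3/2)) * (t^2-1)^((k:ℝ)/2) * J0 := by
    rw [qh_eq, hJ0def, hadef]
    push_cast
    simp only [Jint]
    ring_nf
    rfl
  -- gamma and power facts
  have hGa : Real.Gamma (a+1) = a * Real.Gamma a := Real.Gamma_add_one (ne_of_gt ha0)
  have hGa2 : Real.Gamma a = (a-1) * Real.Gamma (a-1) := by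
    have := Real.Gamma_add_one (ne_of_gt ha1)
    rw [show a - 1 + 1 = a by ring] at this
    exact this
  have hGn : Real.Gamma ((n:ℝ)+5/2) = ((n:ℝ)+3/2) * Real.Gamma ((n:ℝ)+3/2) := by
    have := Real.Gamma_add_one (by positivity : (0:ℝ) < (n:ℝ)+3/2).ne'
    rw [show (n:ℝ) + 3/2 + 1 = (n:ℝ) + 5/2 by ring] at this
    exact this
  have h2pow : (2:ℝ)^((n:ℝ)+5/2) = 2 * (2:ℝ)^((n:ℝ)+3/2) := by
    rw [show (n:ℝ)+5/2 = ((n:ℝ)+3/2) + 1 by ring, Real.rpow_add (by norm_num), Real.rpow_one]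
    ring
  have hT : (t^2-1)^(((k:ℝ)+1)/2) = S * (t^2-1)^((k:ℝ)/2) := by
    rw [show ((k:ℝ)+1)/2 = (k:ℝ)/2 + 1/2 by ring, Real.rpow_add h1]
    have hhalf : (t^2-1) ^ ((1:ℝ)/2) = S := by
      rw [← hS2, ← Real.rpow_natCast S 2, ← Real.rpow_mul hS.le]
      norm_num
    rw [hhalf]; ring
  have hneg : ((-1:ℝ))^(k+1) = -((-1:ℝ))^k := by
    rw [pow_succ]; ring
  -- solve for J2
  have hJ2 : J2 = (2*(n:ℝ)+3) * (t * J1 - J0) / a := by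
    field_simp
    linarith [hkey]
  have hG3 : Real.Gamma ((n:ℝ)+3/2) ≠ 0 := ne_of_gt (Real.Gamma_pos_of_pos (by positivity))
  have hGam1 : Real.Gamma (a-1) ≠ 0 := ne_of_gt (Real.Gamma_pos_of_pos ha1)
  rw [e2, e1, e0, hGa, hGa2, hGn, h2pow, hT, hneg, hJ2]
  have h2p : (2:ℝ)^((n:ℝ)+3/2) ≠ 0 := by positivity
  field_simp
  ring

/-- identity for `16 s₀ q_{n+1,m} τ_{n,m}`; both right-hand terms have
sign `(-1)^m`, hence `τ_{n,m} > 0` for `m ≥ 1`. -/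
theorem tau_identity_and_positivity (η₀ : ℝ) (hη₀ : 0 < η₀) (n m : ℕ) (hm : 1 ≤ m) :
    16 * Real.sinh η₀ * qh η₀ (n + 1) m * tauT η₀ n m =
      -2 * Real.sinh η₀ * (2 * (n : ℝ) + 3) * (2 * (n : ℝ) + 2 * (m : ℝ) + 1) *
          qh η₀ (n + 1) (m - 1) +
        8 * (m : ℝ) * qh η₀ (n + 2) m ∧
    0 < (-1 : ℝ) ^ m *
      (-2 * Real.sinh η₀ * (2 * (n : ℝ) + 3) * (2 * (n : ℝ) + 2 * (m : ℝ) + 1) *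
        qh η₀ (n + 1) (m - 1)) ∧
    0 < (-1 : ℝ) ^ m * (8 * (m : ℝ) * qh η₀ (n + 2) m) ∧
    0 < tauT η₀ n m := by
  obtain ⟨k, rfl⟩ : ∃ k, m = k + 1 := ⟨m - 1, (Nat.succ_pred_eq_of_pos hm).symm⟩
  simp only [Nat.add_sub_cancel]
  have hS : 0 < Real.sinh η₀ := Real.sinh_pos_iff.mpr hη₀
  have hrec := qh_rec η₀ hη₀ n k
  have hs1 : 0 < (-1:ℝ)^(k+1) * qh η₀ (n+1) (k+1) := qh_sign η₀ hη₀ (n+1) (k+1) (by omega)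
  have hs2 : 0 < (-1:ℝ)^(k+1) * qh η₀ (n+2) (k+1) := qh_sign η₀ hη₀ (n+2) (k+1) (by omega)
  have hs0 : 0 < (-1:ℝ)^k * qh η₀ (n+1) k := qh_sign η₀ hη₀ (n+1) k (by omega)
  have hq1 : qh η₀ (n+1) (k+1) ≠ 0 := by
    intro h; rw [h, mul_zero] at hs1; exact lt_irrefl 0 hs1
  have hneg : ((-1:ℝ))^(k+1) = -((-1:ℝ))^k := by rw [pow_succ]; ring
  have hid : 16 * Real.sinh η₀ * qh η₀ (n + 1) (k+1) * tauT η₀ n (k+1) =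
      -2 * Real.sinh η₀ * (2 * (n : ℝ) + 3) * (2 * (n : ℝ) + 2 * ((k:ℝ)+1) + 1) *
          qh η₀ (n + 1) k + 8 * ((k:ℝ)+1) * qh η₀ (n + 2) (k+1) := by
    have h4 : 16 * Real.sinh η₀ * qh η₀ (n + 1) (k+1) * tauT η₀ n (k+1) =
        4*(2*(n:ℝ)+3)*Real.cosh η₀*qh η₀ (n + 1) (k+1) +
          4*(2*(((k:ℝ)+1)-(n:ℝ))-3)*qh η₀ (n + 2) (k+1) := by
      rw [tauT]
      push_cast
      field_simp
      ring
    rw [h4]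
    linear_combination (-4*(2*(n:ℝ)+3)) * hrec
  have hP1 : 0 < (-1 : ℝ) ^ (k+1) *
      (-2 * Real.sinh η₀ * (2 * (n : ℝ) + 3) * (2 * (n : ℝ) + 2 * ((k:ℝ)+1) + 1) *
        qh η₀ (n + 1) k) := by
    have : (-1 : ℝ) ^ (k+1) *
        (-2 * Real.sinh η₀ * (2 * (n : ℝ) + 3) * (2 * (n : ℝ) + 2 * ((k:ℝ)+1) + 1) *
          qh η₀ (n + 1) k)
        = (2 * Real.sinh η₀ * (2 * (n : ℝ) + 3) * (2 * (n : ℝ) + 2 * ((k:ℝ)+1) + 1)) *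
          ((-1:ℝ)^k * qh η₀ (n + 1) k) := by rw [hneg]; ring
    rw [this]
    have hc : (0:ℝ) < 2 * Real.sinh η₀ * (2 * (n : ℝ) + 3) * (2 * (n : ℝ) + 2 * ((k:ℝ)+1) + 1) := by
      positivity
    exact mul_pos hc hs0
  have hP2 : 0 < (-1 : ℝ) ^ (k+1) * (8 * ((k:ℝ)+1) * qh η₀ (n + 2) (k+1)) := by
    have : (-1 : ℝ) ^ (k+1) * (8 * ((k:ℝ)+1) * qh η₀ (n + 2) (k+1))
        = (8 * ((k:ℝ)+1)) * ((-1:ℝ)^(k+1) * qh η₀ (n + 2) (k+1)) := by ring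
    rw [this]
    exact mul_pos (by positivity) hs2
  have htau : 0 < tauT η₀ n (k+1) := by
    have hA : 0 < 16 * Real.sinh η₀ * ((-1:ℝ)^(k+1) * qh η₀ (n+1) (k+1)) :=
      mul_pos (by positivity) hs1
    have hsum : 0 < (-1:ℝ)^(k+1) * (16 * Real.sinh η₀ * qh η₀ (n + 1) (k+1) * tauT η₀ n (k+1)) := by
      rw [hid]
      nlinarith [hP1, hP2]
    have heq : (-1:ℝ)^(k+1) * (16 * Real.sinh η₀ * qh η₀ (n + 1) (k+1) * tauT η₀ n (k+1))
        = (16 * Real.sinh η₀ * ((-1:ℝ)^(k+1) * qh η₀ (n+1) (k+1))) * tauT η₀ n (k+1) := by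
      ring
    rw [heq] at hsum
    nlinarith [hsum, hA]
  push_cast
  exact ⟨hid, hP1, hP2, htau⟩
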